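/- Let D ⊂ ℂ be compact such that every connected component of E = D + B(0,δ) has diameter at most Kδ. Then for any λ ∈ (0,1) and any connected component E_i of E, there exists a cover U_i ⊂ E_i of D_i = E_i ∩ D by at most K'(λ, K) open balls of radius δ centered at points of D_i such that dist(z, ∂U_i) ≥ λδ for every z ∈ D_i. -/

import Mathlib

open Metric Set
open scoped Pointwise ENNReal NNReal

/-- Finite cover lemma: if every connected component of `E = D + B(0,δ)` has diameter
at most `Kδ`, then for any `λ ∈ (0,1)` each set `D_i = E_i ∩ D` (with `E_i` a connected
component of `E`) can be covered by at most `K'(λ,K)` balls of radius `δ` centered at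
points of `D_i`, the cover `U_i` lying in `E_i` and satisfying `dist(z, ∂U_i) ≥ λδ`
for all `z ∈ D_i`. -/
theorem finite_cover_of_component (K lam : ℝ) (hlam : lam ∈ Ioo (0:ℝ) 1) :
    ∃ K' : ℕ, ∀ (D : Set ℂ), IsCompact D → ∀ δ : ℝ, 0 < δ →
      (∀ x ∈ D + ball (0:ℂ) δ,
        diam (connectedComponentIn (D + ball (0:ℂ) δ) x) ≤ K * δ) →
      ∀ x ∈ D + ball (0:ℂ) δ,
        ∃ n : ℕ, n ≤ K' ∧ ∃ p : Fin n → ℂ,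
          (∀ i, p i ∈ connectedComponentIn (D + ball (0:ℂ) δ) x ∩ D) ∧
          (⋃ i, ball (p i) δ) ⊆ connectedComponentIn (D + ball (0:ℂ) δ) x ∧
          connectedComponentIn (D + ball (0:ℂ) δ) x ∩ D ⊆ (⋃ i, ball (p i) δ) ∧
          ∀ z ∈ connectedComponentIn (D + ball (0:ℂ) δ) x ∩ D,
            lam * δ ≤ infDist z (frontier (⋃ i, ball (p i) δ)) := by
  obtain ⟨hl0, hl1⟩ := hlam
  have h1l : 0 < 1 - lam := by linarith
  set c : ℝ := (2 * |K| / (1 - lam) + 2) ^ 2 with hc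
  refine ⟨⌈c⌉₊, ?_⟩
  intro D hD δ hδ hdiam x hx
  set E := D + ball (0:ℂ) δ with hE
  set C := connectedComponentIn E x with hCdef
  set r : ℝ := (1 - lam) * δ with hrdef
  have hr : 0 < r := mul_pos h1l hδ
  have hrδ : r < δ := by nlinarith
  have hEbdd : Bornology.IsBounded E := hD.isBounded.add isBounded_ball
  have hCE : C ⊆ E := connectedComponentIn_subset _ _
  have hCbdd : Bornology.IsBounded C := hEbdd.subset hCE
  have hxC : x ∈ C := mem_connectedComponentIn hx
  have hdiamC : diam C ≤ |K| * δ := (hdiam x hx).trans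
    (mul_le_mul_of_nonneg_right (le_abs_self K) hδ.le)
  -- any ball of radius δ centered in C ∩ D lies in C
  have hballC : ∀ p ∈ C ∩ D, ball p δ ⊆ C := by
    intro p hp
    have hsub : ball p δ ⊆ E := by
      intro y hy
      refine Set.mem_add.2 ⟨p, hp.2, y - p, ?_, by ring⟩
      have hyp : dist y p < δ := mem_ball.1 hy
      simpa [mem_ball_zero_iff, ← Complex.dist_eq] using hyp
    have h2 : ball p δ ⊆ connectedComponentIn E p :=
      (convex_ball p δ).isPreconnected.subset_connectedComponentIn (mem_ball_self hδ) hsub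
    have hpe : connectedComponentIn E p = C :=
      (connectedComponentIn_eq (show p ∈ connectedComponentIn E x from hp.1)).symm
    rw [hpe] at h2
    exact h2
  -- cardinality bound for r-separated subsets of C ∩ D
  have cardBound : ∀ T : Finset ℂ, (↑T ⊆ C ∩ D) →
      (∀ a ∈ T, ∀ b ∈ T, a ≠ b → r ≤ dist a b) → T.card ≤ ⌈c⌉₊ := by
    intro T hTsub hTsep
    rcases T.eq_empty_or_nonempty with rfl | ⟨z0, hz0⟩
    · simp
    have hz0C : z0 ∈ C := (hTsub hz0).1
    have hdisj : (↑T : Set ℂ).PairwiseDisjoint (fun t => ball t (r / 2)) := by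
      intro a ha b hb hab
      exact ball_disjoint_ball (by linarith [hTsep a ha b hb hab])
    have hsubball : ∀ t ∈ T, ball t (r / 2) ⊆ ball z0 (|K| * δ + r) := by
      intro t ht y hy
      have h1 : dist t z0 ≤ |K| * δ :=
        (dist_le_diam_of_mem hCbdd (hTsub ht).1 hz0C).trans hdiamC
      have h2 : dist y t < r / 2 := mem_ball.1 hy
      have : dist y z0 < |K| * δ + r := by
        calc dist y z0 ≤ dist y t + dist t z0 := dist_triangle _ _ _
          _ < r / 2 + |K| * δ := by linarith
          _ ≤ |K| * δ + r := by linarith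
      exact mem_ball.2 this
    have hvol : (T.card : ℝ≥0∞) * (ENNReal.ofReal (r / 2) ^ 2 * NNReal.pi)
        ≤ ENNReal.ofReal (|K| * δ + r) ^ 2 * NNReal.pi := by
      calc (T.card : ℝ≥0∞) * (ENNReal.ofReal (r / 2) ^ 2 * NNReal.pi)
          = ∑ t ∈ T, MeasureTheory.volume (ball t (r / 2)) := by
            simp [Complex.volume_ball, Finset.sum_const, nsmul_eq_mul]
        _ = MeasureTheory.volume (⋃ t ∈ T, ball t (r / 2)) :=
            (MeasureTheory.measure_biUnion_finset hdisj
              (fun t _ => measurableSet_ball)).symm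
        _ ≤ MeasureTheory.volume (ball z0 (|K| * δ + r)) :=
            MeasureTheory.measure_mono (Set.iUnion₂_subset hsubball)
        _ = ENNReal.ofReal (|K| * δ + r) ^ 2 * NNReal.pi := by
            simp [Complex.volume_ball]
    have hpi_ne : (NNReal.pi : ℝ≥0∞) ≠ 0 :=
      ENNReal.coe_ne_zero.2 NNReal.pi_ne_zero
    have hpi_top : (NNReal.pi : ℝ≥0∞) ≠ ⊤ := ENNReal.coe_ne_top
    have hvol2 : (T.card : ℝ≥0∞) * ENNReal.ofReal (r / 2) ^ 2
        ≤ ENNReal.ofReal (|K| * δ + r) ^ 2 := by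
      rw [← ENNReal.mul_le_mul_iff_left hpi_ne hpi_top]
      calc (T.card : ℝ≥0∞) * ENNReal.ofReal (r / 2) ^ 2 * NNReal.pi
          = (T.card : ℝ≥0∞) * (ENNReal.ofReal (r / 2) ^ 2 * NNReal.pi) := by ring
        _ ≤ _ := hvol
    have hbig : 0 ≤ |K| * δ + r := by positivity
    have hreal : (T.card : ℝ) * (r / 2) ^ 2 ≤ (|K| * δ + r) ^ 2 := by
      have := hvol2
      rw [← ENNReal.ofReal_pow (by positivity), ← ENNReal.ofReal_pow hbig,
        ← ENNReal.ofReal_natCast T.card, ← ENNReal.ofReal_mul (by positivity)] at this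
      exact (ENNReal.ofReal_le_ofReal_iff (by positivity)).1 this
    have hcard_c : (T.card : ℝ) ≤ c := by
      have hK : 0 ≤ |K| := abs_nonneg K
      have key : |K| * δ + r = (2 * |K| / (1 - lam) + 2) * (r / 2) := by
        field_simp [hrdef]
        ring
      rw [key] at hreal
      have hr2 : (0:ℝ) < (r / 2) ^ 2 := by positivity
      have : (T.card : ℝ) * (r / 2) ^ 2 ≤ c * (r / 2) ^ 2 := by
        calc (T.card : ℝ) * (r / 2) ^ 2 ≤ ((2 * |K| / (1 - lam) + 2) * (r / 2)) ^ 2 := hreal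
          _ = c * (r / 2) ^ 2 := by rw [hc]; ring
      exact le_of_mul_le_mul_right this hr2
    have : (T.card : ℝ) ≤ (⌈c⌉₊ : ℝ) := hcard_c.trans (Nat.le_ceil c)
    exact_mod_cast this
  rcases (C ∩ D).eq_empty_or_nonempty with hDi | ⟨z0, hz0⟩
  · refine ⟨0, Nat.zero_le _, fun i => i.elim0, fun i => i.elim0, ?_, ?_, ?_⟩
    · simp
    · rw [hDi]; simp
    · intro z hz; rw [hDi] at hz; exact absurd hz (Set.notMem_empty z)
  -- maximal r-separated subset of C ∩ D
  have hsep_single : ({z0} : Finset ℂ) = {z0} := rfl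
  set N : Set ℕ := {n | ∃ T : Finset ℂ, (↑T ⊆ C ∩ D) ∧
    (∀ a ∈ T, ∀ b ∈ T, a ≠ b → r ≤ dist a b) ∧ T.card = n} with hN
  have hN1 : (1 : ℕ) ∈ N := by
    refine ⟨{z0}, by simpa using hz0, ?_, by simp⟩
    intro a ha b hb hab
    simp only [Finset.mem_singleton] at ha hb
    exact absurd (ha.trans hb.symm) hab
  have hNbdd : ∀ n ∈ N, n ≤ ⌈c⌉₊ := by
    rintro n ⟨T, h1, h2, rfl⟩
    exact cardBound T h1 h2
  obtain ⟨T, hTsub, hTsep, hTcard⟩ : sSup N ∈ N :=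
    Nat.sSup_mem ⟨1, hN1⟩ ⟨⌈c⌉₊, fun n hn => hNbdd n hn⟩
  -- maximality gives the net property
  have hnet : ∀ z ∈ C ∩ D, ∃ t ∈ T, dist z t < r := by
    intro z hz
    by_contra hcon
    push_neg at hcon
    have hzT : z ∉ T := fun hzT => by
      have := hcon z hzT
      simp at this
      linarith
    have hmem : T.card + 1 ∈ N := by
      refine ⟨insert z T, ?_, ?_, by rw [Finset.card_insert_of_notMem hzT]⟩
      · intro a ha
        rcases Finset.mem_insert.1 ha with rfl | ha
        · exact hz
        · exact hTsub ha
      · intro a ha b hb hab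
        by_cases haz : a = z
        · subst haz
          have hbT : b ∈ T := by
            rcases Finset.mem_insert.1 hb with rfl | h
            · exact absurd rfl hab
            · exact h
          exact hcon b hbT
        · have haT : a ∈ T := by
            rcases Finset.mem_insert.1 ha with rfl | h
            · exact absurd rfl haz
            · exact h
          by_cases hbz : b = z
          · subst hbz; rw [dist_comm]; exact hcon a haT
          · have hbT : b ∈ T := by
              rcases Finset.mem_insert.1 hb with rfl | h
              · exact absurd rfl hbz
              · exact h
            exact hTsep a haT b hbT hab
    have := le_csSup ⟨⌈c⌉₊, fun n hn => hNbdd n hn⟩ hmem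
    rw [hTcard] at this
    omega
  refine ⟨T.card, by rw [hTcard]; exact hNbdd _ (Nat.sSup_mem ⟨1, hN1⟩ ⟨⌈c⌉₊, fun n hn => hNbdd n hn⟩),
    fun i => (T.equivFin.symm i : ℂ), ?_, ?_, ?_, ?_⟩
  · intro i
    exact hTsub (T.equivFin.symm i).2
  · exact Set.iUnion_subset fun i => hballC _ (hTsub (T.equivFin.symm i).2)
  · intro z hz
    obtain ⟨t, ht, hdist⟩ := hnet z hz
    refine Set.mem_iUnion.2 ⟨T.equivFin ⟨t, ht⟩, ?_⟩
    simp only [Equiv.symm_apply_apply]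
    exact mem_ball.2 (hdist.trans hrδ)
  · intro z hz
    set U : Set ℂ := ⋃ i, ball ((T.equivFin.symm i : ℂ)) δ with hU
    have hUopen : IsOpen U := isOpen_iUnion fun _ => isOpen_ball
    have hzU : z ∈ U := by
      obtain ⟨t, ht, hdist⟩ := hnet z hz
      refine Set.mem_iUnion.2 ⟨T.equivFin ⟨t, ht⟩, ?_⟩
      simp only [Equiv.symm_apply_apply]
      exact mem_ball.2 (hdist.trans hrδ)
    have hballU : ball z (lam * δ) ⊆ U := by
      obtain ⟨t, ht, hdist⟩ := hnet z hz
      intro w hw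
      refine Set.mem_iUnion.2 ⟨T.equivFin ⟨t, ht⟩, ?_⟩
      simp only [Equiv.symm_apply_apply]
      have hwz : dist w z < lam * δ := mem_ball.1 hw
      refine mem_ball.2 ?_
      calc dist w t ≤ dist w z + dist z t := dist_triangle _ _ _
        _ < lam * δ + r := by linarith
        _ = δ := by rw [hrdef]; ring
    have hUsubC : U ⊆ C := Set.iUnion_subset fun i => hballC _ (hTsub (T.equivFin.symm i).2)
    have hfr : (frontier U).Nonempty := by
      by_contra hfr
      rw [Set.not_nonempty_iff_eq_empty, frontier_eq_empty_iff] at hfr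
      rcases hfr with h | h
      · rw [h] at hzU; exact hzU
      · have : Bornology.IsBounded (univ : Set ℂ) := by
          rw [← h]; exact hEbdd.subset (hUsubC.trans hCE)
        exact NormedSpace.unbounded_univ ℝ ℂ this
    by_contra hcon
    push_neg at hcon
    obtain ⟨y, hyfr, hyz⟩ := (infDist_lt_iff hfr).1 hcon
    have hyU : y ∈ U := hballU (mem_ball'.2 hyz)
    rw [hUopen.frontier_eq] at hyfr
    exact hyfr.2 hyU
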